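/- If H is a spanning subgraph of a finite simple graph G, then G \succeq H, i.e., m(H, x) \ge m(G, x) for all real x \ge t(G). -/

import Mathlib

open Polynomial

/-- Number of matchings with exactly `k` edges in `G`. -/
noncomputable def matchingCount {V : Type*} [Fintype V] (G : SimpleGraph V) (k : ℕ) : ℕ :=
  Nat.card {s : Finset (Sym2 V) // s.card = k ∧ (∀ e ∈ s, e ∈ G.edgeSet) ∧
    ∀ e ∈ s, ∀ f ∈ s, e ≠ f → ∀ x : V, x ∈ e → x ∉ f}

/-- The matching polynomial `m(G,x) = ∑ (-1)^k m_k(G) x^(n-2k)`. -/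
noncomputable def matchPoly {V : Type*} [Fintype V] (G : SimpleGraph V) : Polynomial ℝ :=
  ∑ k ∈ Finset.range (Fintype.card V + 1),
    Polynomial.C ((-1 : ℝ) ^ k * (matchingCount G k : ℝ)) *
      Polynomial.X ^ (Fintype.card V - 2 * k)

/-- The maximum real root `t(G)` of the matching polynomial. -/
noncomputable def maxRoot {V : Type*} [Fintype V] (G : SimpleGraph V) : ℝ :=
  sSup {x : ℝ | (matchPoly G).eval x = 0}


section AuxGodsil
open Finset


open scoped Classical in
/-- matchings of `G` with all edge-vertices inside `S` -/
noncomputable def matchingsIn {V : Type*} [Fintype V] (G : SimpleGraph V) (S : Finset V) :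
    Finset (Finset (Sym2 V)) :=
  Finset.univ.filter (fun M => (∀ e ∈ M, e ∈ G.edgeSet) ∧ (∀ e ∈ M, ∀ x : V, x ∈ e → x ∈ S) ∧
    ∀ e ∈ M, ∀ f ∈ M, e ≠ f → ∀ x : V, x ∈ e → x ∉ f)

lemma mem_matchingsIn {V : Type*} [Fintype V] {G : SimpleGraph V} {S : Finset V}
    {M : Finset (Sym2 V)} :
    M ∈ matchingsIn G S ↔ (∀ e ∈ M, e ∈ G.edgeSet) ∧ (∀ e ∈ M, ∀ x : V, x ∈ e → x ∈ S) ∧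
      ∀ e ∈ M, ∀ f ∈ M, e ≠ f → ∀ x : V, x ∈ e → x ∉ f := by
  classical
  simp [matchingsIn]

noncomputable def mp {V : Type*} [Fintype V] (G : SimpleGraph V) (S : Finset V) : Polynomial ℝ :=
  ∑ M ∈ matchingsIn G S, Polynomial.C ((-1 : ℝ) ^ M.card) * Polynomial.X ^ (S.card - 2 * M.card)

lemma empty_mem_matchingsIn {V : Type*} [Fintype V] (G : SimpleGraph V) (S : Finset V) :
    ∅ ∈ matchingsIn G S := by
  rw [mem_matchingsIn]; simp

lemma two_mul_card_le_of_mem {V : Type*} [Fintype V] {G : SimpleGraph V} {S : Finset V}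
    {M : Finset (Sym2 V)} (hM : M ∈ matchingsIn G S) : 2 * M.card ≤ S.card := by
  classical
  rw [mem_matchingsIn] at hM
  obtain ⟨hE, hS, hD⟩ := hM
  induction M using Finset.induction_on generalizing S with
  | empty => simp
  | @insert e M₀ he ih =>
    obtain ⟨a, b⟩ := e
    have habE : s(a,b) ∈ G.edgeSet := hE _ (mem_insert_self _ _)
    have hab : a ≠ b := fun h => G.not_isDiag_of_mem_edgeSet habE (by simp [h])
    have haS : a ∈ S := hS _ (mem_insert_self _ _) a (by simp)
    have hbS : b ∈ S := hS _ (mem_insert_self _ _) b (by simp)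
    have hsub : ∀ f ∈ M₀, ∀ x : V, x ∈ f → x ∈ (S.erase a).erase b := by
      intro f hf x hx
      have hfe : f ≠ s(a,b) := by rintro rfl; exact he hf
      have hdj := hD s(a,b) (mem_insert_self _ _) f (mem_insert_of_mem hf) (Ne.symm hfe)
      have hxa : x ≠ a := fun h => hdj a (by simp) (h ▸ hx)
      have hxb : x ≠ b := fun h => hdj b (by simp) (h ▸ hx)
      exact Finset.mem_erase.2 ⟨hxb, Finset.mem_erase.2 ⟨hxa, hS f (mem_insert_of_mem hf) x hx⟩⟩
    have h2S : 2 ≤ S.card := by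
      have : ({a, b} : Finset V) ⊆ S :=
        Finset.insert_subset_iff.2 ⟨haS, Finset.singleton_subset_iff.2 hbS⟩
      calc 2 = ({a, b} : Finset V).card := (Finset.card_pair hab).symm
        _ ≤ S.card := Finset.card_le_card this
    have hcard : ((S.erase a).erase b).card = S.card - 2 := by
      rw [Finset.card_erase_of_mem (Finset.mem_erase.2 ⟨Ne.symm hab, hbS⟩),
        Finset.card_erase_of_mem haS]
      omega
    have := ih (fun f hf => hE f (mem_insert_of_mem hf)) hsub
      (fun f hf g hg hfg => hD f (mem_insert_of_mem hf) g (mem_insert_of_mem hg) hfg)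
    rw [Finset.card_insert_of_notMem he]
    omega

lemma mp_monic {V : Type*} [Fintype V] (G : SimpleGraph V) (S : Finset V) :
    (mp G S).Monic := by
  classical
  have hsplit : mp G S = X ^ S.card + ∑ M ∈ (matchingsIn G S).erase ∅,
      Polynomial.C ((-1 : ℝ) ^ M.card) * Polynomial.X ^ (S.card - 2 * M.card) := by
    rw [mp, ← Finset.add_sum_erase _ _ (empty_mem_matchingsIn G S)]
    simp
  have hdeg : (∑ M ∈ (matchingsIn G S).erase ∅,
      Polynomial.C ((-1 : ℝ) ^ M.card) * Polynomial.X ^ (S.card - 2 * M.card)).degree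
      < (S.card : WithBot ℕ) := by
    refine lt_of_le_of_lt (Polynomial.degree_sum_le _ _) ?_
    rw [Finset.sup_lt_iff (by exact WithBot.bot_lt_coe _)]
    intro M hM
    obtain ⟨hne, hMm⟩ := Finset.mem_erase.1 hM
    have h1 : 1 ≤ M.card := Finset.card_pos.2 (Finset.nonempty_iff_ne_empty.2 hne)
    have h2 : 2 * M.card ≤ S.card := two_mul_card_le_of_mem hMm
    refine lt_of_le_of_lt (Polynomial.degree_C_mul_X_pow_le _ _) ?_
    exact_mod_cast (by omega : S.card - 2 * M.card < S.card)
  rw [hsplit]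
  exact (Polynomial.monic_X_pow _).add_of_left (by rwa [Polynomial.degree_X_pow])

lemma exists_top_root {p : Polynomial ℝ} (hp : p.Monic) {y : ℝ} (hy : p.eval y ≤ 0) :
    ∃ r, y ≤ r ∧ p.eval r = 0 ∧ ∀ z, r < z → 0 < p.eval z := by
  classical
  have hp0 : p ≠ 0 := hp.ne_zero
  have hdeg : 0 < p.degree := by
    rcases Nat.eq_zero_or_pos p.natDegree with h | h
    · exfalso
      rw [Polynomial.Monic.natDegree_eq_zero hp] at h
      simp [h] at hy
      linarith
    · exact Polynomial.natDegree_pos_iff_degree_pos.1 h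
  have htend := p.tendsto_atTop_of_leadingCoeff_nonneg hdeg (by rw [hp.leadingCoeff]; norm_num)
  obtain ⟨b, hb⟩ := Filter.eventually_atTop.1 (htend.eventually_ge_atTop 1)
  have hroot_exists : ∀ w : ℝ, p.eval w ≤ 0 → ∃ z, w ≤ z ∧ p.eval z = 0 := by
    intro w hw
    have hwc : w ≤ max b w := le_max_right _ _
    have hc : (0:ℝ) ∈ Set.Icc (p.eval w) (p.eval (max b w)) :=
      ⟨hw, le_trans zero_le_one (hb _ (le_max_left _ _))⟩
    have := intermediate_value_Icc hwc (p.continuousOn (s := Set.Icc w (max b w)))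
    obtain ⟨z, hz, hz0⟩ := this hc
    exact ⟨z, hz.1, hz0⟩
  obtain ⟨z, hyz, hz0⟩ := hroot_exists y hy
  set F := p.roots.toFinset.filter (fun r => y ≤ r) with hF
  have hzF : z ∈ F := by
    simp only [hF, Finset.mem_filter, Multiset.mem_toFinset, Polynomial.mem_roots hp0]
    exact ⟨hz0, hyz⟩
  have hFne : F.Nonempty := ⟨z, hzF⟩
  refine ⟨F.max' hFne, ?_, ?_, ?_⟩
  · have := F.max'_mem hFne
    simp only [hF, Finset.mem_filter] at this
    exact this.2
  · have := F.max'_mem hFne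
    simp only [hF, Finset.mem_filter, Multiset.mem_toFinset, Polynomial.mem_roots hp0] at this
    exact this.1
  · intro w hw
    by_contra hle
    push_neg at hle
    obtain ⟨z', hwz', hz'0⟩ := hroot_exists w hle
    have hz'F : z' ∈ F := by
      simp only [hF, Finset.mem_filter, Multiset.mem_toFinset, Polynomial.mem_roots hp0]
      refine ⟨hz'0, ?_⟩
      have : y ≤ F.max' hFne := by
        have := F.max'_mem hFne
        simp only [hF, Finset.mem_filter] at this
        exact this.2
      linarith
    have := F.le_max' z' hz'F
    linarith

lemma mp_edge_rec {V : Type*} [Fintype V] [DecidableEq V] (G : SimpleGraph V) (S : Finset V) {u v : V}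
    (h : G.Adj u v) (hu : u ∈ S) (hv : v ∈ S) :
    mp G S = mp (G.deleteEdges {s(u,v)}) S - mp G ((S.erase u).erase v) := by
  classical
  set e : Sym2 V := s(u,v) with he
  have huv : u ≠ v := h.ne
  set S' := (S.erase u).erase v with hS'
  have hS'card : S'.card = S.card - 2 := by
    rw [hS', Finset.card_erase_of_mem (Finset.mem_erase.2 ⟨(Ne.symm huv), hv⟩),
      Finset.card_erase_of_mem hu]
    omega
  have hS'sub : S' ⊆ S := (Finset.erase_subset _ _).trans (Finset.erase_subset _ _)
  have huS' : u ∉ S' := fun hx => (Finset.mem_erase.1 (Finset.mem_erase.1 hx).2).1 rfl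
  have hvS' : v ∉ S' := fun hx => (Finset.mem_erase.1 hx).1 rfl
  have hsplit := Finset.sum_filter_add_sum_filter_not (matchingsIn G S) (fun M => e ∈ M)
    (fun M => Polynomial.C ((-1 : ℝ) ^ M.card) * Polynomial.X ^ (S.card - 2 * M.card))
  -- the matchings avoiding e are exactly matchings of the deleted graph
  have hnot : (matchingsIn G S).filter (fun M => e ∉ M) =
      matchingsIn (G.deleteEdges {e}) S := by
    ext M
    simp only [Finset.mem_filter, mem_matchingsIn, SimpleGraph.edgeSet_deleteEdges,
      Set.mem_diff, Set.mem_singleton_iff]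
    constructor
    · rintro ⟨⟨hE, hS, hD⟩, heM⟩
      exact ⟨fun f hf => ⟨hE f hf, fun hfe => heM (hfe ▸ hf)⟩, hS, hD⟩
    · rintro ⟨hE, hS, hD⟩
      exact ⟨⟨fun f hf => (hE f hf).1, hS, hD⟩, fun heM => (hE e heM).2 rfl⟩
  -- the matchings containing e are the image of insert e on matchings in S'
  have hyes : (matchingsIn G S).filter (fun M => e ∈ M) =
      (matchingsIn G S').image (insert e) := by
    ext M
    simp only [Finset.mem_filter, Finset.mem_image]
    constructor
    · rintro ⟨hM, heM⟩
      rw [mem_matchingsIn] at hM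
      obtain ⟨hE, hSu, hD⟩ := hM
      refine ⟨M.erase e, ?_, by rw [Finset.insert_erase heM]⟩
      rw [mem_matchingsIn]
      refine ⟨fun f hf => hE f (Finset.mem_of_mem_erase hf), ?_, ?_⟩
      · intro f hf x hx
        have hfe : f ≠ e := (Finset.mem_erase.1 hf).1
        have hfM : f ∈ M := Finset.mem_of_mem_erase hf
        have hdj := hD e heM f hfM (Ne.symm hfe)
        have hxu : x ≠ u := fun hh => hdj u (by rw [he]; simp) (hh ▸ hx)
        have hxv : x ≠ v := fun hh => hdj v (by rw [he]; simp) (hh ▸ hx)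
        exact Finset.mem_erase.2 ⟨hxv, Finset.mem_erase.2 ⟨hxu, hSu f hfM x hx⟩⟩
      · intro f hf g hg hfg
        exact hD f (Finset.mem_of_mem_erase hf) g (Finset.mem_of_mem_erase hg) hfg
    · rintro ⟨M', hM', rfl⟩
      rw [mem_matchingsIn] at hM'
      obtain ⟨hE, hSu, hD⟩ := hM'
      have heM' : e ∉ M' := by
        intro hmem
        exact huS' (hSu e hmem u (by rw [he]; simp))
      have hmemSe : ∀ x : V, x ∈ e → x ∈ S := by
        intro x hx
        rw [he, Sym2.mem_iff] at hx
        rcases hx with rfl | rfl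
        · exact hu
        · exact hv
      have hnotS' : ∀ x : V, x ∈ e → x ∉ S' := by
        intro x hx
        rw [he, Sym2.mem_iff] at hx
        rcases hx with rfl | rfl
        · exact huS'
        · exact hvS'
      constructor
      · rw [mem_matchingsIn]
        refine ⟨?_, ?_, ?_⟩
        · intro f hf
          rcases Finset.mem_insert.1 hf with rfl | hf
          · rw [he]; exact h
          · exact hE f hf
        · intro f hf x hx
          rcases Finset.mem_insert.1 hf with rfl | hf
          · exact hmemSe x hx
          · exact hS'sub (hSu f hf x hx)
        · intro f hf g hg hfg x hxf
          rcases Finset.mem_insert.1 hf with rfl | hf <;>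
            rcases Finset.mem_insert.1 hg with rfl | hg
          · exact absurd rfl hfg
          · exact fun hxg => hnotS' x hxf (hSu g hg x hxg)
          · exact fun hxg => hnotS' x hxg (hSu f hf x hxf)
          · exact hD f hf g hg hfg x hxf
      · exact Finset.mem_insert_self _ _
  -- injectivity of insert e on matchings in S'
  have hinj : Set.InjOn (insert e) (matchingsIn G S' : Set (Finset (Sym2 V))) := by
    intro M₁ h₁ M₂ h₂ hM
    have he₁ : e ∉ M₁ := by
      rw [Finset.mem_coe, mem_matchingsIn] at h₁
      intro hmem
      exact huS' (h₁.2.1 e hmem u (by rw [he]; simp))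
    have he₂ : e ∉ M₂ := by
      rw [Finset.mem_coe, mem_matchingsIn] at h₂
      intro hmem
      exact huS' (h₂.2.1 e hmem u (by rw [he]; simp))
    have := congrArg (fun s => Finset.erase s e) hM
    simpa [Finset.erase_insert he₁, Finset.erase_insert he₂] using this
  have himg : ∑ M ∈ (matchingsIn G S').image (insert e),
      Polynomial.C ((-1 : ℝ) ^ M.card) * Polynomial.X ^ (S.card - 2 * M.card)
      = - mp G S' := by
    rw [Finset.sum_image (fun M₁ h₁ M₂ h₂ => hinj h₁ h₂), mp, ← Finset.sum_neg_distrib]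
    refine Finset.sum_congr rfl ?_
    intro M hM
    have heM : e ∉ M := by
      rw [mem_matchingsIn] at hM
      intro hmem
      exact huS' (hM.2.1 e hmem u (by rw [he]; simp))
    have hcard : (insert e M).card = M.card + 1 := Finset.card_insert_of_notMem heM
    have h2m : 2 * M.card ≤ S'.card := two_mul_card_le_of_mem hM
    rw [hcard]
    have hexp : S.card - 2 * (M.card + 1) = S'.card - 2 * M.card := by omega
    rw [hexp, pow_succ, Polynomial.C_mul, Polynomial.C_neg, Polynomial.C_1]
    ring
  have hnotsum : ∑ M ∈ (matchingsIn G S).filter (fun M => e ∉ M),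
      Polynomial.C ((-1 : ℝ) ^ M.card) * Polynomial.X ^ (S.card - 2 * M.card)
      = mp (G.deleteEdges {e}) S := by
    rw [hnot, mp]
  rw [mp, ← hsplit, hyes, himg, hnotsum]
  ring

lemma mp_vertex_rec {V : Type*} [Fintype V] [DecidableEq V] (G : SimpleGraph V)
    [DecidableRel G.Adj] (S : Finset V)
    {u : V} (hu : u ∈ S) :
    mp G S = Polynomial.X * mp G (S.erase u) -
      ∑ v ∈ S.filter (fun v => G.Adj u v), mp G ((S.erase u).erase v) := by
  classical
  set N := S.filter (fun v => G.Adj u v) with hN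
  have hsplit := Finset.sum_filter_add_sum_filter_not (matchingsIn G S)
    (fun M => ∀ e ∈ M, u ∉ e)
    (fun M => Polynomial.C ((-1 : ℝ) ^ M.card) * Polynomial.X ^ (S.card - 2 * M.card))
  -- uncovered matchings
  have huncov : (matchingsIn G S).filter (fun M => ∀ e ∈ M, u ∉ e) =
      matchingsIn G (S.erase u) := by
    ext M
    simp only [Finset.mem_filter, mem_matchingsIn]
    constructor
    · rintro ⟨⟨hE, hS, hD⟩, hP⟩
      refine ⟨hE, ?_, hD⟩
      intro f hf x hx
      exact Finset.mem_erase.2 ⟨fun hh => hP f hf (hh ▸ hx), hS f hf x hx⟩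
    · rintro ⟨hE, hS, hD⟩
      exact ⟨⟨hE, fun f hf x hx => Finset.mem_of_mem_erase (hS f hf x hx), hD⟩,
        fun f hf hx => (Finset.mem_erase.1 (hS f hf u hx)).1 rfl⟩
  have huncovsum : ∑ M ∈ matchingsIn G (S.erase u),
      Polynomial.C ((-1 : ℝ) ^ M.card) * Polynomial.X ^ (S.card - 2 * M.card)
      = Polynomial.X * mp G (S.erase u) := by
    rw [mp, Finset.mul_sum]
    refine Finset.sum_congr rfl ?_
    intro M hM
    have h2m : 2 * M.card ≤ (S.erase u).card := two_mul_card_le_of_mem hM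
    have hcard : (S.erase u).card = S.card - 1 := Finset.card_erase_of_mem hu
    have hS1 : 1 ≤ S.card := Finset.card_pos.2 ⟨u, hu⟩
    have hexp : S.card - 2 * M.card = ((S.erase u).card - 2 * M.card) + 1 := by omega
    rw [hexp, pow_succ]
    ring
  -- covered matchings
  have hcov : (matchingsIn G S).filter (fun M => ¬ ∀ e ∈ M, u ∉ e) =
      N.biUnion (fun v => (matchingsIn G ((S.erase u).erase v)).image (insert s(u,v))) := by
    ext M
    simp only [Finset.mem_filter, Finset.mem_biUnion, Finset.mem_image]
    constructor
    · rintro ⟨hM, hP⟩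
      push_neg at hP
      obtain ⟨e, heM, hue⟩ := hP
      rw [mem_matchingsIn] at hM
      obtain ⟨hE, hSu, hD⟩ := hM
      -- find the neighbour w with e = s(u,w)
      obtain ⟨w, hew⟩ : ∃ w, e = s(u, w) := by
        induction e with
        | _ a b =>
          rcases Sym2.mem_iff.1 hue with rfl | rfl
          · exact ⟨b, rfl⟩
          · exact ⟨a, Sym2.eq_swap⟩
      subst hew
      have hadj : G.Adj u w := (SimpleGraph.mem_edgeSet G).1 (hE _ heM)
      have hwS : w ∈ S := hSu _ heM w (by simp)
      refine ⟨w, ?_, M.erase s(u,w), ?_, by rw [Finset.insert_erase heM]⟩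
      · rw [hN, Finset.mem_filter]; exact ⟨hwS, hadj⟩
      · rw [mem_matchingsIn]
        refine ⟨fun f hf => hE f (Finset.mem_of_mem_erase hf), ?_, ?_⟩
        · intro f hf x hx
          have hfe : f ≠ s(u,w) := (Finset.mem_erase.1 hf).1
          have hfM : f ∈ M := Finset.mem_of_mem_erase hf
          have hdj := hD s(u,w) heM f hfM (Ne.symm hfe)
          have hxu : x ≠ u := fun hh => hdj u (by simp) (hh ▸ hx)
          have hxw : x ≠ w := fun hh => hdj w (by simp) (hh ▸ hx)
          exact Finset.mem_erase.2 ⟨hxw, Finset.mem_erase.2 ⟨hxu, hSu f hfM x hx⟩⟩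
        · intro f hf g hg hfg
          exact hD f (Finset.mem_of_mem_erase hf) g (Finset.mem_of_mem_erase hg) hfg
    · rintro ⟨v, hvN, M', hM', rfl⟩
      rw [hN, Finset.mem_filter] at hvN
      obtain ⟨hvS, hadj⟩ := hvN
      have huv : u ≠ v := hadj.ne
      rw [mem_matchingsIn] at hM'
      obtain ⟨hE, hSu, hD⟩ := hM'
      have huS' : u ∉ (S.erase u).erase v := fun hx =>
        (Finset.mem_erase.1 (Finset.mem_erase.1 hx).2).1 rfl
      have hvS' : v ∉ (S.erase u).erase v := fun hx => (Finset.mem_erase.1 hx).1 rfl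
      have hnotS' : ∀ x : V, x ∈ s(u,v) → x ∉ (S.erase u).erase v := by
        intro x hx
        rcases Sym2.mem_iff.1 hx with rfl | rfl
        · exact huS'
        · exact hvS'
      have hsub : (S.erase u).erase v ⊆ S :=
        (Finset.erase_subset _ _).trans (Finset.erase_subset _ _)
      constructor
      · rw [mem_matchingsIn]
        refine ⟨?_, ?_, ?_⟩
        · intro f hf
          rcases Finset.mem_insert.1 hf with rfl | hf
          · exact hadj
          · exact hE f hf
        · intro f hf x hx
          rcases Finset.mem_insert.1 hf with rfl | hf
          · rcases Sym2.mem_iff.1 hx with rfl | rfl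
            · exact hu
            · exact hvS
          · exact hsub (hSu f hf x hx)
        · intro f hf g hg hfg x hxf
          rcases Finset.mem_insert.1 hf with rfl | hf <;>
            rcases Finset.mem_insert.1 hg with rfl | hg
          · exact absurd rfl hfg
          · exact fun hxg => hnotS' x hxf (hSu g hg x hxg)
          · exact fun hxg => hnotS' x hxg (hSu f hf x hxf)
          · exact hD f hf g hg hfg x hxf
      · intro hP
        exact hP s(u,v) (Finset.mem_insert_self _ _) (by simp)
  -- the union over neighbours is pairwise disjoint
  have hdisj : (↑N : Set V).PairwiseDisjoint
      (fun v => (matchingsIn G ((S.erase u).erase v)).image (insert s(u,v))) := by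
    intro v hv w hw hvw
    simp only [Function.onFun, Finset.disjoint_left]
    intro M hMv hMw
    obtain ⟨M₁, hM₁, rfl⟩ := Finset.mem_image.1 hMv
    obtain ⟨M₂, hM₂, hM₂eq⟩ := Finset.mem_image.1 hMw
    rw [mem_matchingsIn] at hM₁
    have hsw : s(u,w) ∈ insert s(u,v) M₁ := hM₂eq ▸ Finset.mem_insert_self _ _
    have hne : s(u,w) ≠ s(u,v) := by
      intro hh
      exact hvw (Sym2.congr_right.1 hh.symm)
    have hswM₁ : s(u,w) ∈ M₁ := by
      rcases Finset.mem_insert.1 hsw with hh | hh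
      · exact absurd hh hne
      · exact hh
    have hu' := hM₁.2.1 s(u,w) hswM₁ u (by simp)
    exact (Finset.mem_erase.1 (Finset.mem_erase.1 hu').2).1 rfl
  have hcovsum : ∑ M ∈ (matchingsIn G S).filter (fun M => ¬ ∀ e ∈ M, u ∉ e),
      Polynomial.C ((-1 : ℝ) ^ M.card) * Polynomial.X ^ (S.card - 2 * M.card)
      = - ∑ v ∈ N, mp G ((S.erase u).erase v) := by
    rw [hcov, Finset.sum_biUnion hdisj, ← Finset.sum_neg_distrib]
    refine Finset.sum_congr rfl ?_
    intro v hvN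
    rw [hN, Finset.mem_filter] at hvN
    obtain ⟨hvS, hadj⟩ := hvN
    have huv : u ≠ v := hadj.ne
    have hnotin : ∀ M ∈ matchingsIn G ((S.erase u).erase v), s(u,v) ∉ M := by
      intro M hM hmem
      rw [mem_matchingsIn] at hM
      have := hM.2.1 s(u,v) hmem u (by simp)
      exact (Finset.mem_erase.1 (Finset.mem_erase.1 this).2).1 rfl
    have hinj : ∀ M₁ ∈ matchingsIn G ((S.erase u).erase v),
        ∀ M₂ ∈ matchingsIn G ((S.erase u).erase v),
        insert s(u,v) M₁ = insert s(u,v) M₂ → M₁ = M₂ := by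
      intro M₁ h₁ M₂ h₂ hM
      have := congrArg (fun s => Finset.erase s s(u,v)) hM
      simpa [Finset.erase_insert (hnotin M₁ h₁), Finset.erase_insert (hnotin M₂ h₂)] using this
    rw [Finset.sum_image hinj, mp, ← Finset.sum_neg_distrib]
    refine Finset.sum_congr rfl ?_
    intro M hM
    have hcard : (insert s(u,v) M).card = M.card + 1 :=
      Finset.card_insert_of_notMem (hnotin M hM)
    have h2m : 2 * M.card ≤ ((S.erase u).erase v).card := two_mul_card_le_of_mem hM
    have hScard : ((S.erase u).erase v).card = S.card - 2 := by
      rw [Finset.card_erase_of_mem (Finset.mem_erase.2 ⟨Ne.symm huv, hvS⟩),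
        Finset.card_erase_of_mem hu]
      omega
    have h2S : 2 ≤ S.card := by
      have : ({u, v} : Finset V) ⊆ S :=
        Finset.insert_subset_iff.2 ⟨hu, Finset.singleton_subset_iff.2 hvS⟩
      calc 2 = ({u, v} : Finset V).card := (Finset.card_pair huv).symm
        _ ≤ S.card := Finset.card_le_card this
    have hexp : S.card - 2 * (insert s(u,v) M).card = ((S.erase u).erase v).card - 2 * M.card := by
      rw [hcard]; omega
    rw [hexp, hcard, pow_succ, Polynomial.C_mul, Polynomial.C_neg, Polynomial.C_1]
    ring
  rw [mp, ← hsplit, huncov, huncovsum, hcovsum]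
  ring

lemma posOn_erase {V : Type*} [Fintype V] [DecidableEq V] (G : SimpleGraph V) :
    ∀ n (S : Finset V), S.card = n → ∀ u ∈ S, ∀ x : ℝ,
      (∀ y, x ≤ y → 0 < (mp G S).eval y) →
      ∀ y, x ≤ y → 0 < (mp G (S.erase u)).eval y := by
  classical
  intro n
  induction n using Nat.strong_induction_on with
  | _ n ih =>
    intro S hS u hu x hpos y hxy
    by_contra hle
    push_neg at hle
    obtain ⟨r, hyr, hr0, hrpos⟩ := exists_top_root (mp_monic G (S.erase u)) hle
    have hterm : ∀ v ∈ S.filter (fun v => G.Adj u v),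
        0 ≤ (mp G ((S.erase u).erase v)).eval r := by
      intro v hv
      rw [Finset.mem_filter] at hv
      obtain ⟨hvS, hadj⟩ := hv
      have hvSu : v ∈ S.erase u := Finset.mem_erase.2 ⟨hadj.ne', hvS⟩
      have hcard : (S.erase u).card = n - 1 := by
        rw [Finset.card_erase_of_mem hu, hS]
      have hn1 : 1 ≤ n := by
        rw [← hS]; exact Finset.card_pos.2 ⟨u, hu⟩
      have hposz : ∀ z, r < z → 0 < (mp G ((S.erase u).erase v)).eval z := by
        intro z hrz
        exact ih (n - 1) (by omega) (S.erase u) hcard v hvSu z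
          (fun w hzw => hrpos w (lt_of_lt_of_le hrz hzw)) z le_rfl
      have htend : Filter.Tendsto (fun t => (mp G ((S.erase u).erase v)).eval t)
          (nhdsWithin r (Set.Ioi r)) (nhds ((mp G ((S.erase u).erase v)).eval r)) :=
        ((mp G ((S.erase u).erase v)).continuousAt).continuousWithinAt.tendsto
      refine ge_of_tendsto htend ?_
      exact Filter.eventually_of_mem self_mem_nhdsWithin (fun z hz => (hposz z hz).le)
    have hrec := mp_vertex_rec G S hu
    have heval := congrArg (Polynomial.eval r) hrec
    rw [Polynomial.eval_sub, Polynomial.eval_mul, Polynomial.eval_X,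
      Polynomial.eval_finset_sum, hr0, mul_zero, zero_sub] at heval
    have hsum : 0 ≤ ∑ v ∈ S.filter (fun v => G.Adj u v),
        (mp G ((S.erase u).erase v)).eval r :=
      Finset.sum_nonneg hterm
    have hposr : 0 < (mp G S).eval r := hpos r (le_trans hxy hyr)
    rw [heval] at hposr
    linarith

lemma posOn_all {V : Type*} [Fintype V] [DecidableEq V] (G : SimpleGraph V) {x : ℝ}
    (hpos : ∀ y, x ≤ y → 0 < (mp G Finset.univ).eval y) :
    ∀ (S : Finset V), ∀ y, x ≤ y → 0 < (mp G S).eval y := by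
  classical
  have key : ∀ k (S : Finset V), S.card + k = Fintype.card V →
      ∀ y, x ≤ y → 0 < (mp G S).eval y := by
    intro k
    induction k with
    | zero =>
      intro S hcard
      have : S = Finset.univ := Finset.eq_univ_of_card S (by simpa using hcard)
      rw [this]; exact hpos
    | succ k ihk =>
      intro S hcard
      have hne : S ≠ Finset.univ := by
        intro h
        rw [h, Finset.card_univ] at hcard
        omega
      obtain ⟨u, hu⟩ : ∃ u, u ∉ S := by
        by_contra hh
        push_neg at hh
        exact hne (Finset.eq_univ_iff_forall.2 hh)
      have hins : (insert u S).card + k = Fintype.card V := by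
        rw [Finset.card_insert_of_notMem hu]; omega
      have hSer : S = (insert u S).erase u := by
        rw [Finset.erase_insert hu]
      rw [hSer]
      exact posOn_erase G (insert u S).card (insert u S) rfl u (Finset.mem_insert_self _ _) x
        (ihk (insert u S) hins)
  intro S
  refine key (Fintype.card V - S.card) S ?_
  have := Finset.card_le_card (Finset.subset_univ S)
  rw [Finset.card_univ] at this
  omega

lemma eval_le_deleteEdge {V : Type*} [Fintype V] [DecidableEq V] (G : SimpleGraph V) {u v : V}
    (h : G.Adj u v) {x : ℝ} (hpos : ∀ y, x ≤ y → 0 < (mp G Finset.univ).eval y) :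
    ∀ y, x ≤ y → (mp G Finset.univ).eval y ≤ (mp (G.deleteEdges {s(u,v)}) Finset.univ).eval y := by
  intro y hxy
  have hrec := mp_edge_rec G Finset.univ h (Finset.mem_univ u) (Finset.mem_univ v)
  have heval := congrArg (Polynomial.eval y) hrec
  rw [Polynomial.eval_sub] at heval
  have hterm := posOn_all G hpos ((Finset.univ.erase u).erase v) y hxy
  linarith

lemma eval_mono_of_le {V : Type*} [Fintype V] [DecidableEq V] :
    ∀ k (G H : SimpleGraph V), H ≤ G → Set.ncard (G.edgeSet \ H.edgeSet) = k →
      ∀ x : ℝ, (∀ y, x ≤ y → 0 < (mp G Finset.univ).eval y) →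
      ∀ y, x ≤ y → (mp G Finset.univ).eval y ≤ (mp H Finset.univ).eval y := by
  classical
  intro k
  induction k with
  | zero =>
    intro G H hHG hcard x hpos y hxy
    have hfin : (G.edgeSet \ H.edgeSet).Finite := Set.toFinite _
    have hempty : G.edgeSet \ H.edgeSet = ∅ := by
      rwa [← Set.ncard_eq_zero hfin]
    have hsub : G.edgeSet ⊆ H.edgeSet := by
      intro e he
      by_contra heH
      have : e ∈ G.edgeSet \ H.edgeSet := ⟨he, heH⟩
      rw [hempty] at this
      exact this
    have : G = H := by
      apply SimpleGraph.edgeSet_inj.1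
      exact le_antisymm hsub (SimpleGraph.edgeSet_mono hHG)
    rw [this]
  | succ k ihk =>
    intro G H hHG hcard x hpos y hxy
    have hfin : (G.edgeSet \ H.edgeSet).Finite := Set.toFinite _
    have hne : (G.edgeSet \ H.edgeSet).Nonempty := by
      rw [Set.nonempty_iff_ne_empty]
      intro h
      rw [h, Set.ncard_empty] at hcard
      omega
    obtain ⟨e, he⟩ := hne
    obtain ⟨heG, heH⟩ := he
    obtain ⟨u, v⟩ := e
    have heG' : s(u,v) ∈ G.edgeSet := heG
    have heH' : s(u,v) ∉ H.edgeSet := heH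
    have hadj : G.Adj u v := (SimpleGraph.mem_edgeSet G).1 heG'
    set G' := G.deleteEdges {s(u,v)} with hG'
    have hHG' : H ≤ G' := by
      intro a b hab
      rw [SimpleGraph.deleteEdges_adj]
      refine ⟨hHG hab, ?_⟩
      intro hmem
      rw [Set.mem_singleton_iff] at hmem
      exact heH' (hmem ▸ ((SimpleGraph.mem_edgeSet H).2 hab))
    have hG'edge : G'.edgeSet = G.edgeSet \ {s(u,v)} := SimpleGraph.edgeSet_deleteEdges _
    have hdiff : G'.edgeSet \ H.edgeSet = (G.edgeSet \ H.edgeSet) \ {s(u,v)} := by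
      rw [hG'edge]
      ext f
      simp only [Set.mem_diff, Set.mem_singleton_iff]
      tauto
    have hmemd : s(u,v) ∈ G.edgeSet \ H.edgeSet := ⟨heG', heH'⟩
    have hcard' : Set.ncard (G'.edgeSet \ H.edgeSet) = k := by
      rw [hdiff, Set.ncard_diff_singleton_of_mem hmemd, hcard]
      omega
    have hstep := eval_le_deleteEdge G hadj hpos
    have hpos' : ∀ z, x ≤ z → 0 < (mp G' Finset.univ).eval z :=
      fun z hxz => lt_of_lt_of_le (hpos z hxz) (hstep z hxz)
    exact le_trans (hstep y hxy) (ihk G' H hHG' hcard' x hpos' y hxy)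

lemma matchingCount_eq {V : Type*} [Fintype V] (G : SimpleGraph V) (k : ℕ) :
    matchingCount G k = ((matchingsIn G Finset.univ).filter (fun M => M.card = k)).card := by
  classical
  rw [matchingCount, Nat.card_eq_fintype_card, Fintype.card_subtype]
  congr 1
  ext M
  simp only [Finset.mem_filter, Finset.mem_univ, true_and, mem_matchingsIn]
  constructor
  · rintro ⟨h1, h2, h3⟩
    exact ⟨⟨h2, fun f hf x hx => by simp, h3⟩, h1⟩
  · rintro ⟨⟨h2, _, h3⟩, h1⟩
    exact ⟨h1, h2, h3⟩

lemma matchPoly_eq_mp {V : Type*} [Fintype V] (G : SimpleGraph V) :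
    matchPoly G = mp G Finset.univ := by
  classical
  rw [matchPoly, mp]
  have hmaps : ∀ M ∈ matchingsIn G Finset.univ,
      M.card ∈ Finset.range (Fintype.card V + 1) := by
    intro M hM
    have := two_mul_card_le_of_mem hM
    rw [Finset.card_univ] at this
    rw [Finset.mem_range]
    omega
  rw [← Finset.sum_fiberwise_of_maps_to hmaps
    (fun M => Polynomial.C ((-1 : ℝ) ^ M.card) *
      Polynomial.X ^ ((Finset.univ : Finset V).card - 2 * M.card))]
  refine Finset.sum_congr rfl ?_
  intro k hk
  have hterm : ∀ M ∈ (matchingsIn G Finset.univ).filter (fun M => M.card = k),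
      Polynomial.C ((-1 : ℝ) ^ M.card) *
        Polynomial.X ^ ((Finset.univ : Finset V).card - 2 * M.card)
      = Polynomial.C ((-1 : ℝ) ^ k) * Polynomial.X ^ (Fintype.card V - 2 * k) := by
    intro M hM
    have hMk : M.card = k := (Finset.mem_filter.1 hM).2
    rw [hMk, Finset.card_univ]
  rw [Finset.sum_congr rfl hterm, Finset.sum_const, matchingCount_eq G k, nsmul_eq_mul]
  rw [mul_comm ((-1 : ℝ) ^ k) _, Polynomial.C_mul, ← mul_assoc]
  simp


end AuxGodsil

/-- If `H` is a spanning subgraph of `G`, then `G ⪰ H`: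
`m(H,x) ≥ m(G,x)` for all `x ≥ t(G)`. -/
theorem gsucceq_of_spanning_subgraph {V : Type*} [Fintype V]
    (G H : SimpleGraph V) (hHG : H ≤ G) :
    ∀ x : ℝ, maxRoot G ≤ x → (matchPoly G).eval x ≤ (matchPoly H).eval x := by
  classical
  intro x hx
  have hmonic : (matchPoly G).Monic := by
    rw [matchPoly_eq_mp]; exact mp_monic G Finset.univ
  have hposgt : ∀ z, maxRoot G < z → ∀ y, z ≤ y → 0 < (matchPoly G).eval y := by
    intro z hz y hzy
    by_contra hle
    push_neg at hle
    obtain ⟨r, hyr, hr0, _⟩ := exists_top_root hmonic hle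
    have hfin : {t : ℝ | (matchPoly G).eval t = 0}.Finite := by
      exact Polynomial.finite_setOf_isRoot hmonic.ne_zero
    have hbdd : BddAbove {t : ℝ | (matchPoly G).eval t = 0} := hfin.bddAbove
    have hmem : r ∈ {t : ℝ | (matchPoly G).eval t = 0} := hr0
    have hler : r ≤ maxRoot G := le_csSup hbdd hmem
    linarith
  have hineq : ∀ z, maxRoot G < z → (matchPoly G).eval z ≤ (matchPoly H).eval z := by
    intro z hz
    have hpos : ∀ y, z ≤ y → 0 < (mp G Finset.univ).eval y := by
      intro y hzy
      rw [← matchPoly_eq_mp]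
      exact hposgt z hz y hzy
    have := eval_mono_of_le (Set.ncard (G.edgeSet \ H.edgeSet)) G H hHG rfl z hpos z le_rfl
    rwa [matchPoly_eq_mp G, matchPoly_eq_mp H]
  set q := matchPoly H - matchPoly G with hq
  have htend : Filter.Tendsto (fun t => q.eval t) (nhdsWithin x (Set.Ioi x))
      (nhds (q.eval x)) := (q.continuousAt).continuousWithinAt.tendsto
  have hev : ∀ᶠ t in nhdsWithin x (Set.Ioi x), 0 ≤ q.eval t := by
    refine Filter.eventually_of_mem self_mem_nhdsWithin ?_
    intro t ht
    have : maxRoot G < t := lt_of_le_of_lt hx ht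
    have := hineq t this
    rw [hq, Polynomial.eval_sub]
    linarith
  have h0 : 0 ≤ q.eval x := ge_of_tendsto htend hev
  rw [hq, Polynomial.eval_sub] at h0
  linarith
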